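/- Let P be a symmetric positive definite n×n matrix, C an m×n matrix with nonzero rows C_i^T, and y̲_i < 0 < ȳ_i bounds for each i. Define W^min = min_i min{ȳ_i^2, y̲_i^2} / (C_i^T P^{-1} C_i). Then W^min equals the minimum of x^T P x over all x ≠ 0 lying on the boundary of the polytope P = {x : y̲ ≤ Cx ≤ ȳ}, i.e., over all x such that C_i^T x = y̲_i or C_i^T x = ȳ_i for some i. -/

import Mathlib

open Matrix

theorem stmt1 {m n : ℕ} (hm : 0 < m) (P : Matrix (Fin n) (Fin n) ℝ) (hP : P.PosDef)
    (C : Matrix (Fin m) (Fin n) ℝ) (hC : ∀ i, C i ≠ 0)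
    (ylo yhi : Fin m → ℝ) (hy : ∀ i, ylo i < 0 ∧ 0 < yhi i) :
    IsLeast {v : ℝ | ∃ x : Fin n → ℝ, x ≠ 0 ∧
        (∃ i, C i ⬝ᵥ x = ylo i ∨ C i ⬝ᵥ x = yhi i) ∧ v = x ⬝ᵥ (P *ᵥ x)}
      (⨅ i : Fin m, min ((yhi i) ^ 2) ((ylo i) ^ 2) / (C i ⬝ᵥ (P⁻¹ *ᵥ C i))) := by
  haveI : Nonempty (Fin m) := ⟨⟨0, hm⟩⟩
  have hPt : Pᵀ = P := by have := hP.1.eq; simpa using this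
  have hPinv : P * P⁻¹ = 1 := mul_nonsing_inv P hP.det_pos.ne'.isUnit
  have hPP : ∀ y : Fin n → ℝ, P *ᵥ (P⁻¹ *ᵥ y) = y := by
    intro y; rw [mulVec_mulVec, hPinv, one_mulVec]
  -- symmetry of the quadratic form
  have sym : ∀ v x : Fin n → ℝ, v ⬝ᵥ (P *ᵥ x) = x ⬝ᵥ (P *ᵥ v) := by
    intro v x
    rw [dotProduct_mulVec, ← mulVec_transpose, hPt, dotProduct_comm]
  have pos : ∀ x : Fin n → ℝ, x ≠ 0 → 0 < x ⬝ᵥ (P *ᵥ x) := by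
    intro x hx; have := hP.dotProduct_mulVec_pos hx; simpa using this
  have nonneg : ∀ x : Fin n → ℝ, 0 ≤ x ⬝ᵥ (P *ᵥ x) := by
    intro x; have := hP.posSemidef.dotProduct_mulVec_nonneg x; simpa using this
  set q : Fin m → ℝ := fun i => C i ⬝ᵥ (P⁻¹ *ᵥ C i) with hqdef
  have hv0 : ∀ i, P⁻¹ *ᵥ C i ≠ 0 := by
    intro i h
    apply hC i
    have := hPP (C i)
    rw [h, mulVec_zero] at this
    exact this.symm
  have hq : ∀ i, 0 < q i := by
    intro i
    have h1 : 0 < (P⁻¹ *ᵥ C i) ⬝ᵥ (P *ᵥ (P⁻¹ *ᵥ C i)) := pos _ (hv0 i)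
    rw [hPP] at h1
    rw [hqdef]
    calc (0:ℝ) < (P⁻¹ *ᵥ C i) ⬝ᵥ C i := h1
      _ = C i ⬝ᵥ (P⁻¹ *ᵥ C i) := dotProduct_comm _ _
  -- Cauchy–Schwarz
  have cs : ∀ (v x : Fin n → ℝ), 0 < v ⬝ᵥ (P *ᵥ v) →
      (v ⬝ᵥ (P *ᵥ x)) ^ 2 ≤ (v ⬝ᵥ (P *ᵥ v)) * (x ⬝ᵥ (P *ᵥ x)) := by
    intro v x ha
    set a := v ⬝ᵥ (P *ᵥ v)
    set b := v ⬝ᵥ (P *ᵥ x)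
    set c := x ⬝ᵥ (P *ᵥ x)
    have key : 0 ≤ (x - (b / a) • v) ⬝ᵥ (P *ᵥ (x - (b / a) • v)) := nonneg _
    have expand : (x - (b / a) • v) ⬝ᵥ (P *ᵥ (x - (b / a) • v))
        = c - 2 * (b / a) * b + (b / a) ^ 2 * a := by
      rw [mulVec_sub, mulVec_smul, dotProduct_sub, sub_dotProduct, sub_dotProduct,
        smul_dotProduct, smul_dotProduct, dotProduct_smul, dotProduct_smul]
      have h1 : v ⬝ᵥ (P *ᵥ x) = x ⬝ᵥ (P *ᵥ v) := sym v x
      simp only [smul_eq_mul]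
      rw [← h1]
      ring
    rw [expand] at key
    have h2 : 0 ≤ c - b ^ 2 / a := by
      have : c - 2 * (b / a) * b + (b / a) ^ 2 * a = c - b ^ 2 / a := by
        field_simp; ring
      linarith [this ▸ key]
    have := (div_le_iff₀ ha).mp (by linarith : b ^ 2 / a ≤ c)
    linarith [this]
  set f : Fin m → ℝ := fun i => min ((yhi i) ^ 2) ((ylo i) ^ 2) / q i with hfdef
  constructor
  · -- membership
    obtain ⟨i₀, hi₀⟩ := Finite.exists_min f
    have hinf : ⨅ i, f i = f i₀ :=
      le_antisymm (ciInf_le (Finite.bddBelow_range f) i₀) (le_ciInf hi₀)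
    rw [show (⨅ i : Fin m, min ((yhi i) ^ 2) ((ylo i) ^ 2) / (C i ⬝ᵥ (P⁻¹ *ᵥ C i))) = ⨅ i, f i from rfl, hinf]
    set b := if yhi i₀ ^ 2 ≤ ylo i₀ ^ 2 then yhi i₀ else ylo i₀ with hbdef
    have hb0 : b ≠ 0 := by
      rw [hbdef]; split
      · exact (hy i₀).2.ne'
      · exact (hy i₀).1.ne
    have hbsq : b ^ 2 = min ((yhi i₀) ^ 2) ((ylo i₀) ^ 2) := by
      rw [hbdef, min_def]; split <;> rfl
    refine ⟨(b / q i₀) • (P⁻¹ *ᵥ C i₀), ?_, ⟨i₀, ?_⟩, ?_⟩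
    · exact smul_ne_zero (div_ne_zero hb0 (hq i₀).ne') (hv0 i₀)
    · have hcx : C i₀ ⬝ᵥ ((b / q i₀) • (P⁻¹ *ᵥ C i₀)) = b := by
        rw [dotProduct_smul, smul_eq_mul]
        show b / q i₀ * q i₀ = b
        field_simp
        exact div_self (hq i₀).ne'
      rw [hcx, hbdef]
      split
      · right; rfl
      · left; rfl
    · have hPx : P *ᵥ ((b / q i₀) • (P⁻¹ *ᵥ C i₀)) = (b / q i₀) • C i₀ := by
        rw [mulVec_smul, hPP]
      rw [hPx, dotProduct_smul, smul_dotProduct, smul_eq_mul, smul_eq_mul]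
      have hcomm : (P⁻¹ *ᵥ C i₀) ⬝ᵥ C i₀ = q i₀ := dotProduct_comm _ _
      rw [hcomm]
      show _ = _
      simp only [hfdef]
      rw [← hbsq, div_mul_cancel₀ b (hq i₀).ne']
      ring
  · -- lower bound
    rintro v ⟨x, hx, ⟨i, hi⟩, rfl⟩
    have h1 : (⨅ i, f i) ≤ f i := ciInf_le (Finite.bddBelow_range f) i
    have hbm : min ((yhi i) ^ 2) ((ylo i) ^ 2) ≤ (C i ⬝ᵥ x) ^ 2 := by
      rcases hi with h | h
      · rw [h]; exact min_le_right _ _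
      · rw [h]; exact min_le_left _ _
    have hvpv : (P⁻¹ *ᵥ C i) ⬝ᵥ (P *ᵥ (P⁻¹ *ᵥ C i)) = q i := by
      rw [hPP]; exact dotProduct_comm _ _
    have hvpx : (P⁻¹ *ᵥ C i) ⬝ᵥ (P *ᵥ x) = C i ⬝ᵥ x := by
      rw [sym, hPP]; exact dotProduct_comm _ _
    have hcs := cs (P⁻¹ *ᵥ C i) x (by rw [hvpv]; exact hq i)
    rw [hvpv, hvpx] at hcs
    have h2 : f i ≤ x ⬝ᵥ (P *ᵥ x) := by
      rw [hfdef]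
      have h3 : (C i ⬝ᵥ x) ^ 2 / q i ≤ x ⬝ᵥ (P *ᵥ x) :=
        (div_le_iff₀ (hq i)).mpr (by linarith [hcs])
      have h4 : min ((yhi i) ^ 2) ((ylo i) ^ 2) / q i ≤ (C i ⬝ᵥ x) ^ 2 / q i :=
        (div_le_div_iff_of_pos_right (hq i)).mpr hbm
      exact h4.trans h3
    exact h1.trans h2
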